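/- Under the identification Φ, the bijection x of 2^ℕ corresponds to translation by 1: for every infinite binary sequence ξ, Φ(ξ) + 1 = Φ(x(ξ)), where ∞ + 1 = ∞. -/

import Mathlib

set_option linter.unusedSectionVars false
open ENNReal
namespace SB14

def mat : List Bool → ℕ × ℕ × ℕ × ℕ
  | [] => (1, 0, 0, 1)
  | true :: w =>
    let m := mat w; (m.1 + m.2.2.1, m.2.1 + m.2.2.2, m.2.2.1, m.2.2.2)
  | false :: w =>
    let m := mat w; (m.1, m.2.1, m.1 + m.2.2.1, m.2.1 + m.2.2.2)

lemma matP_pos (w : List Bool) : 1 ≤ (mat w).1 := by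
  induction w with
  | nil => simp [mat]
  | cons b w ih => cases b <;> simp [mat] <;> omega

lemma matQ'_pos (w : List Bool) : 1 ≤ (mat w).2.2.2 := by
  induction w with
  | nil => simp [mat]
  | cons b w ih => cases b <;> simp [mat] <;> omega

lemma helper1 (a b : ℕ) (h : a ≠ 0 ∨ b ≠ 0) :
    (1 : ℝ≥0∞) + (a : ℝ≥0∞) / b = ((a : ℝ≥0∞) + b) / b := by
  rcases eq_or_ne b 0 with hb | hb
  · subst hb
    rcases h with h | h
    · simp [ENNReal.div_zero (by exact_mod_cast h : ((a : ℝ≥0∞)) ≠ 0)]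
    · simp at h
  · have hb' : (b : ℝ≥0∞) ≠ 0 := by exact_mod_cast hb
    rw [ENNReal.add_div, ENNReal.div_self hb' (natCast_ne_top b), add_comm]

lemma helper2 (a b : ℕ) (h : a ≠ 0 ∨ b ≠ 0) :
    ((1 : ℝ≥0∞) + ((a : ℝ≥0∞) / b)⁻¹)⁻¹ = (a : ℝ≥0∞) / ((a : ℝ≥0∞) + b) := by
  rcases eq_or_ne a 0 with ha | ha
  · have hb : b ≠ 0 := by tauto
    have hb' : (b : ℝ≥0∞) ≠ 0 := by exact_mod_cast hb
    subst ha
    simp [ENNReal.div_eq_zero_iff, hb', ENNReal.add_eq_top]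
  · have ha' : (a : ℝ≥0∞) ≠ 0 := by exact_mod_cast ha
    rw [ENNReal.inv_div (Or.inr (natCast_ne_top a)) (Or.inr ha'),
      helper1 b a (Or.inr ha),
      ENNReal.inv_div (Or.inl (natCast_ne_top a)) (Or.inl ha'), add_comm]
lemma mono2 {x y : ℝ≥0∞} (h : x ≤ y) : (1 + x⁻¹)⁻¹ ≤ (1 + y⁻¹)⁻¹ :=
  ENNReal.inv_le_inv.2 (add_le_add_right (ENNReal.inv_le_inv.2 h) 1)

lemma mat_det (w : List Bool) :
    (mat w).1 * (mat w).2.2.2 = (mat w).2.1 * (mat w).2.2.1 + 1 := by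
  induction w with
  | nil => simp [mat]
  | cons b w ih => cases b <;> simp [mat] <;> nlinarith [ih]

lemma mat_map_not (w : List Bool) :
    mat (w.map not) = ((mat w).2.2.2, (mat w).2.2.1, (mat w).2.1, (mat w).1) := by
  induction w with
  | nil => simp [mat]
  | cons b w ih => cases b <;> simp [mat, ih] <;> omega
lemma mat_sumP (w : List Bool) : w.count true + 1 ≤ (mat w).1 + (mat w).2.1 := by
  induction w with
  | nil => simp [mat]
  | cons b w ih =>
    have := matQ'_pos w
    cases b <;> simp [mat, List.count_cons] <;> omega

lemma diff_le (p p' q q' m : ℕ) (hdet : p * q' = p' * q + 1) (hp : 1 ≤ p)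
    (hm : m + 1 ≤ p + p') :
    ((q + q' : ℕ) : ℝ≥0∞) / ((p + p' : ℕ) : ℝ≥0∞) ≤
      (q : ℝ≥0∞) / (p : ℝ≥0∞) + ((m + 1 : ℕ) : ℝ≥0∞)⁻¹ := by
  have hnat : (q + q') * p = q * (p + p') + 1 := by
    calc (q + q') * p = q * p + p * q' := by ring
    _ = q * p + (p' * q + 1) := by rw [hdet]
    _ = q * (p + p') + 1 := by ring
  set B := p * (p + p') with hB
  have hp0 : (p : ℝ≥0∞) ≠ 0 := by exact_mod_cast by omega
  have hpp0 : ((p + p' : ℕ) : ℝ≥0∞) ≠ 0 := by exact_mod_cast by omega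
  have hB0 : (B : ℝ≥0∞) ≠ 0 := by
    have : B ≠ 0 := by simp [hB]; omega
    exact_mod_cast this
  have hmi : ((B : ℝ≥0∞))⁻¹ = (p : ℝ≥0∞)⁻¹ * ((p + p' : ℕ) : ℝ≥0∞)⁻¹ := by
    rw [hB, Nat.cast_mul]
    exact ENNReal.mul_inv (Or.inl hp0) (Or.inr hpp0)
  have key : ((q + q' : ℕ) : ℝ≥0∞) / ((p + p' : ℕ) : ℝ≥0∞)
      = ((q * (p + p') : ℕ) : ℝ≥0∞) * ((B : ℝ≥0∞))⁻¹ + ((B : ℝ≥0∞))⁻¹ := by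
    have h1 : ((q + q' : ℕ) : ℝ≥0∞) * (p : ℝ≥0∞) = ((q * (p + p') : ℕ) : ℝ≥0∞) + 1 := by
      exact_mod_cast congrArg (fun k : ℕ => (k : ℝ≥0∞)) hnat
    calc ((q + q' : ℕ) : ℝ≥0∞) / ((p + p' : ℕ) : ℝ≥0∞)
        = ((q + q' : ℕ) : ℝ≥0∞) * ((p : ℝ≥0∞) * (p : ℝ≥0∞)⁻¹) * ((p + p' : ℕ) : ℝ≥0∞)⁻¹ := by
          rw [ENNReal.mul_inv_cancel hp0 (natCast_ne_top p), mul_one, div_eq_mul_inv]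
      _ = (((q + q' : ℕ) : ℝ≥0∞) * (p : ℝ≥0∞)) * ((p : ℝ≥0∞)⁻¹ * ((p + p' : ℕ) : ℝ≥0∞)⁻¹) := by
          ring
      _ = (((q * (p + p') : ℕ) : ℝ≥0∞) + 1) * ((B : ℝ≥0∞))⁻¹ := by rw [h1, hmi]
      _ = ((q * (p + p') : ℕ) : ℝ≥0∞) * ((B : ℝ≥0∞))⁻¹ + ((B : ℝ≥0∞))⁻¹ := by
          rw [add_mul, one_mul]
  have hqp : ((q * (p + p') : ℕ) : ℝ≥0∞) * ((B : ℝ≥0∞))⁻¹ = (q : ℝ≥0∞) / (p : ℝ≥0∞) := by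
    rw [hmi, Nat.cast_mul, div_eq_mul_inv]
    calc (q : ℝ≥0∞) * ((p + p' : ℕ) : ℝ≥0∞) * ((p : ℝ≥0∞)⁻¹ * ((p + p' : ℕ) : ℝ≥0∞)⁻¹)
        = ((q : ℝ≥0∞) * (p : ℝ≥0∞)⁻¹) * (((p + p' : ℕ) : ℝ≥0∞) * ((p + p' : ℕ) : ℝ≥0∞)⁻¹) := by
          ring
      _ = (q : ℝ≥0∞) * (p : ℝ≥0∞)⁻¹ := by
          rw [ENNReal.mul_inv_cancel hpp0 (natCast_ne_top _), mul_one]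
  rw [key, hqp]
  refine add_le_add_right (ENNReal.inv_le_inv.2 ?_) _
  have : m + 1 ≤ B := le_trans hm (Nat.le_mul_of_pos_left _ (by omega))
  exact_mod_cast this

section PhiLemmas
open Stream'

variable (φ : Stream' Bool → ℝ≥0∞)
  (hφ0 : ∀ ξ, φ (Stream'.cons false ξ) = (1 + (φ ξ)⁻¹)⁻¹)
  (hφ1 : ∀ ξ, φ (Stream'.cons true ξ) = 1 + φ ξ)

include hφ0 hφ1

lemma ubA (w : List Bool) (ξ : Stream' Bool) :
    φ (w ++ₛ ξ) ≤ ((mat w).1 : ℝ≥0∞) / ((mat w).2.2.1 : ℝ≥0∞) := by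
  induction w generalizing ξ with
  | nil =>
    rw [nil_append_stream]
    simp [mat, ENNReal.div_zero one_ne_zero]
  | cons b w ih =>
    have hp : ((mat w).1 : ℕ) ≠ 0 := by have := matP_pos w; omega
    cases b
    · rw [cons_append_stream, hφ0]
      refine le_trans (mono2 (ih ξ)) ?_
      rw [helper2 _ _ (Or.inl hp)]
      simp only [mat]
      push_cast
      exact le_refl _
    · rw [cons_append_stream, hφ1]
      refine le_trans (add_le_add_right (ih ξ) 1) ?_
      rw [helper1 _ _ (Or.inl hp)]
      simp only [mat]
      push_cast
      exact le_refl _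

lemma ubB (w : List Bool) (ξ : Stream' Bool) (hξ : φ ξ ≤ 1) :
    φ (w ++ₛ ξ) ≤ (((mat w).1 + (mat w).2.1 : ℕ) : ℝ≥0∞) /
      (((mat w).2.2.1 + (mat w).2.2.2 : ℕ) : ℝ≥0∞) := by
  induction w generalizing ξ with
  | nil =>
    rw [nil_append_stream]
    simpa [mat] using hξ
  | cons b w ih =>
    have hp : ((mat w).1 + (mat w).2.1 : ℕ) ≠ 0 := by have := matP_pos w; omega
    cases b
    · rw [cons_append_stream, hφ0]
      refine le_trans (mono2 (ih ξ hξ)) ?_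
      rw [helper2 _ _ (Or.inl hp)]
      simp only [mat]
      push_cast
      ring_nf
      exact le_refl _
    · rw [cons_append_stream, hφ1]
      refine le_trans (add_le_add_right (ih ξ hξ) 1) ?_
      rw [helper1 _ _ (Or.inl hp)]
      simp only [mat]
      push_cast
      ring_nf
      exact le_refl _

lemma eq0 (w : List Bool) (ξ : Stream' Bool) (hξ : φ ξ = 0) :
    φ (w ++ₛ ξ) = ((mat w).2.1 : ℝ≥0∞) / ((mat w).2.2.2 : ℝ≥0∞) := by
  induction w generalizing ξ with
  | nil =>
    rw [nil_append_stream]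
    simpa [mat] using hξ
  | cons b w ih =>
    have hq : ((mat w).2.2.2 : ℕ) ≠ 0 := by have := matQ'_pos w; omega
    cases b
    · rw [cons_append_stream, hφ0, ih ξ hξ, helper2 _ _ (Or.inr hq)]
      simp only [mat]
      push_cast
      ring_nf
    · rw [cons_append_stream, hφ1, ih ξ hξ, helper1 _ _ (Or.inr hq)]
      simp only [mat]
      push_cast
      ring_nf

lemma eqTop (w : List Bool) (ξ : Stream' Bool) (hξ : φ ξ = ⊤) :
    φ (w ++ₛ ξ) = ((mat w).1 : ℝ≥0∞) / ((mat w).2.2.1 : ℝ≥0∞) := by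
  induction w generalizing ξ with
  | nil =>
    rw [nil_append_stream]
    simp [mat, hξ, ENNReal.div_zero one_ne_zero]
  | cons b w ih =>
    have hp : ((mat w).1 : ℕ) ≠ 0 := by have := matP_pos w; omega
    cases b
    · rw [cons_append_stream, hφ0, ih ξ hξ, helper2 _ _ (Or.inl hp)]
      simp only [mat]
      push_cast
      ring_nf
    · rw [cons_append_stream, hφ1, ih ξ hξ, helper1 _ _ (Or.inl hp)]
      simp only [mat]
      push_cast
      ring_nf

lemma phi_allTrue (ξ : Stream' Bool) (h : ∀ n, ξ.get n = true) : φ ξ = ⊤ := by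
  have h1 : ξ = Stream'.cons true ξ := by
    refine Stream'.ext fun n => ?_
    cases n with
    | zero => rw [get_zero_cons, h 0]
    | succ n => rw [get_succ_cons, h n, h (n+1)]
  by_contra htop
  have h2 : φ ξ = 1 + φ ξ := by conv_lhs => rw [h1, hφ1]
  have h3 : (0 : ℝ≥0∞) + φ ξ = 1 + φ ξ := by rw [zero_add]; exact h2
  have := (ENNReal.add_left_inj htop).1 h3
  simp at this

lemma phi_allFalse (ξ : Stream' Bool) (h : ∀ n, ξ.get n = false) : φ ξ = 0 := by
  have h1 : ξ = Stream'.cons false ξ := by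
    refine Stream'.ext fun n => ?_
    cases n with
    | zero => rw [get_zero_cons, h 0]
    | succ n => rw [get_succ_cons, h n, h (n+1)]
  have h2 : (φ ξ)⁻¹ = 1 + (φ ξ)⁻¹ := by
    conv_lhs => rw [h1, hφ0, inv_inv]
  rw [← ENNReal.inv_eq_top]
  by_contra htop
  have h3 : (0 : ℝ≥0∞) + (φ ξ)⁻¹ = 1 + (φ ξ)⁻¹ := by rw [zero_add]; exact h2
  have := (ENNReal.add_left_inj htop).1 h3
  simp at this

omit hφ0 hφ1 in
lemma count_take_succ (ξ : Stream' Bool) (b : Bool) (k : ℕ) (h : ξ.get k = b) :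
    (Stream'.take (k+1) ξ).count b = (Stream'.take k ξ).count b + 1 := by
  simp [Stream'.take_succ' k, List.count_append, h]

omit hφ0 hφ1 in
lemma count_take_mono (ξ : Stream' Bool) (b : Bool) :
    Monotone (fun n => (Stream'.take n ξ).count b) := by
  apply monotone_nat_of_le_succ
  intro n
  simp only [Stream'.take_succ' n, List.count_append]
  exact Nat.le_add_right _ _

omit hφ0 hφ1 in
lemma exists_good (ξ : Stream' Bool)
    (hT : ∀ N, ∃ k, N ≤ k ∧ ξ.get k = true) :
    ∀ m, ∃ n, ξ.get n = true ∧ m ≤ (Stream'.take n ξ).count true := by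
  intro m
  induction m with
  | zero =>
    obtain ⟨k, -, hk⟩ := hT 0
    exact ⟨k, hk, Nat.zero_le _⟩
  | succ m ih =>
    obtain ⟨n, hn, hc⟩ := ih
    obtain ⟨t, ht, htt⟩ := hT (n+1)
    refine ⟨t, htt, ?_⟩
    have h1 := count_take_succ ξ true n hn
    have h3 := count_take_mono ξ true ht
    simp only at h3
    omega

lemma lbA (w : List Bool) (ξ : Stream' Bool) :
    ((mat w).2.1 : ℝ≥0∞) / ((mat w).2.2.2 : ℝ≥0∞) ≤ φ (w ++ₛ ξ) := by
  induction w generalizing ξ with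
  | nil =>
    rw [nil_append_stream]
    simp [mat]
  | cons b w ih =>
    have hq : ((mat w).2.2.2 : ℕ) ≠ 0 := by have := matQ'_pos w; omega
    cases b
    · rw [cons_append_stream, hφ0]
      refine le_trans ?_ (mono2 (ih ξ))
      rw [helper2 _ _ (Or.inr hq)]
      simp only [mat]
      push_cast
      exact le_refl _
    · rw [cons_append_stream, hφ1]
      refine le_trans ?_ (add_le_add_right (ih ξ) 1)
      rw [helper1 _ _ (Or.inr hq)]
      simp only [mat]
      push_cast
      exact le_refl _

lemma lbB (w : List Bool) (ξ : Stream' Bool) (hξ : 1 ≤ φ ξ) :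
    (((mat w).1 + (mat w).2.1 : ℕ) : ℝ≥0∞) /
      (((mat w).2.2.1 + (mat w).2.2.2 : ℕ) : ℝ≥0∞) ≤ φ (w ++ₛ ξ) := by
  induction w generalizing ξ with
  | nil =>
    rw [nil_append_stream]
    simpa [mat] using hξ
  | cons b w ih =>
    have hq : ((mat w).2.2.1 + (mat w).2.2.2 : ℕ) ≠ 0 := by have := matQ'_pos w; omega
    cases b
    · rw [cons_append_stream, hφ0]
      refine le_trans ?_ (mono2 (ih ξ hξ))
      rw [helper2 _ _ (Or.inr hq)]
      simp only [mat]
      push_cast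
      ring_nf
      exact le_refl _
    · rw [cons_append_stream, hφ1]
      refine le_trans ?_ (add_le_add_right (ih ξ hξ) 1)
      rw [helper1 _ _ (Or.inr hq)]
      simp only [mat]
      push_cast
      ring_nf
      exact le_refl _

lemma head_true_le_one (ζ : Stream' Bool) (h : ζ.get 0 = true) :
    φ (Stream'.map not ζ) ≤ 1 := by
  have h1 : ζ = Stream'.cons true (Stream'.tail ζ) := by
    conv_lhs => rw [← Stream'.eta ζ]
    rw [show ζ.head = true from h]
  rw [h1, Stream'.map_cons]
  simp only [Bool.not_true]
  rw [hφ0]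
  exact ENNReal.inv_le_one.2 le_self_add

lemma head_true_ge_one (ζ : Stream' Bool) (h : ζ.get 0 = true) : 1 ≤ φ ζ := by
  have h1 : ζ = Stream'.cons true (Stream'.tail ζ) := by
    conv_lhs => rw [← Stream'.eta ζ]
    rw [show ζ.head = true from h]
  rw [h1, hφ1]
  exact le_self_add

lemma phi_not (ξ : Stream' Bool) : φ (Stream'.map not ξ) = (φ ξ)⁻¹ := by
  by_cases hT : ∃ N, ∀ k, N ≤ k → ξ.get k = true
  · obtain ⟨N, hN⟩ := hT
    have hsplit : Stream'.take N ξ ++ₛ Stream'.drop N ξ = ξ := Stream'.append_take_drop N ξ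
    set w := Stream'.take N ξ with hw
    have hdt : φ (Stream'.drop N ξ) = ⊤ :=
      phi_allTrue φ hφ0 hφ1 _ (fun n => by
        rw [Stream'.get_drop]; exact hN _ (Nat.le_add_right _ _))
    have hdf : φ (Stream'.map not (Stream'.drop N ξ)) = 0 :=
      phi_allFalse φ hφ0 hφ1 _ (fun n => by
        rw [Stream'.get_map, Stream'.get_drop, hN _ (Nat.le_add_right _ _)]; rfl)
    have hxi : φ ξ = ((mat w).1 : ℝ≥0∞) / ((mat w).2.2.1 : ℝ≥0∞) := by
      rw [← hsplit]; exact eqTop φ hφ0 hφ1 w _ hdt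
    have hnxi : φ (Stream'.map not ξ) =
        ((mat w).2.2.1 : ℝ≥0∞) / ((mat w).1 : ℝ≥0∞) := by
      rw [← hsplit, Stream'.map_append_stream]
      rw [eq0 φ hφ0 hφ1 _ _ hdf, mat_map_not]
    have hp : ((mat w).1 : ℝ≥0∞) ≠ 0 := by
      have := matP_pos w; exact_mod_cast by omega
    rw [hxi, hnxi, ENNReal.inv_div (Or.inr (ENNReal.natCast_ne_top _)) (Or.inr hp)]
  · by_cases hF : ∃ N, ∀ k, N ≤ k → ξ.get k = false
    · obtain ⟨N, hN⟩ := hF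
      have hsplit : Stream'.take N ξ ++ₛ Stream'.drop N ξ = ξ := Stream'.append_take_drop N ξ
      set w := Stream'.take N ξ with hw
      have hdt : φ (Stream'.drop N ξ) = 0 :=
        phi_allFalse φ hφ0 hφ1 _ (fun n => by
          rw [Stream'.get_drop]; exact hN _ (Nat.le_add_right _ _))
      have hdf : φ (Stream'.map not (Stream'.drop N ξ)) = ⊤ :=
        phi_allTrue φ hφ0 hφ1 _ (fun n => by
          rw [Stream'.get_map, Stream'.get_drop, hN _ (Nat.le_add_right _ _)]; rfl)
      have hxi : φ ξ = ((mat w).2.1 : ℝ≥0∞) / ((mat w).2.2.2 : ℝ≥0∞) := by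
        rw [← hsplit]; exact eq0 φ hφ0 hφ1 w _ hdt
      have hnxi : φ (Stream'.map not ξ) =
          ((mat w).2.2.2 : ℝ≥0∞) / ((mat w).2.1 : ℝ≥0∞) := by
        rw [← hsplit, Stream'.map_append_stream]
        rw [eqTop φ hφ0 hφ1 _ _ hdf, mat_map_not]
      have hq : ((mat w).2.2.2 : ℝ≥0∞) ≠ 0 := by
        have := matQ'_pos w; exact_mod_cast by omega
      rw [hxi, hnxi, ENNReal.inv_div (Or.inl (ENNReal.natCast_ne_top _)) (Or.inl hq)]
    · -- infinitely many `true`s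
      push_neg at hF
      have hT' : ∀ N, ∃ k, N ≤ k ∧ ξ.get k = true := by
        intro N; obtain ⟨k, hk1, hk2⟩ := hF N; exact ⟨k, hk1, by simpa using hk2⟩
      -- for every j, two-sided estimate within (j+1)⁻¹
      have key : ∀ j : ℕ, φ (Stream'.map not ξ) ≤ (φ ξ)⁻¹ + ((j + 1 : ℕ) : ℝ≥0∞)⁻¹ ∧
          (φ ξ)⁻¹ ≤ φ (Stream'.map not ξ) + ((j + 1 : ℕ) : ℝ≥0∞)⁻¹ := by
        intro j
        obtain ⟨n, hntrue, hcount⟩ := exists_good ξ hT' j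
        have hsplit : Stream'.take n ξ ++ₛ Stream'.drop n ξ = ξ := Stream'.append_take_drop n ξ
        set w := Stream'.take n ξ with hw
        set p := (mat w).1 with hp_def
        set p' := (mat w).2.1 with hp'_def
        set q := (mat w).2.2.1 with hq_def
        set q' := (mat w).2.2.2 with hq'_def
        have hp1 : 1 ≤ p := matP_pos w
        have hq'1 : 1 ≤ q' := matQ'_pos w
        have hm : j + 1 ≤ p + p' := by
          have := mat_sumP w
          have h2 : j ≤ (Stream'.take n ξ).count true := hcount
          omega
        have hhead : (Stream'.drop n ξ).get 0 = true := by
          rw [Stream'.get_drop, Nat.add_zero]; exact hntrue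
        -- upper bound for φ ξ, lower bound for φ ξ
        have hxiu : φ ξ ≤ (p : ℝ≥0∞) / q := by
          rw [← hsplit]; exact ubA φ hφ0 hφ1 w _
        have hxil : ((p + p' : ℕ) : ℝ≥0∞) / ((q + q' : ℕ) : ℝ≥0∞) ≤ φ ξ := by
          rw [← hsplit]; exact lbB φ hφ0 hφ1 w _ (head_true_ge_one φ hφ0 hφ1 _ hhead)
        -- bounds for φ (map not ξ), via the complementary word
        have hnd : φ (Stream'.map not (Stream'.drop n ξ)) ≤ 1 :=
          head_true_le_one φ hφ0 hφ1 _ hhead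
        have hnxiu : φ (Stream'.map not ξ) ≤
            ((q' + q : ℕ) : ℝ≥0∞) / ((p' + p : ℕ) : ℝ≥0∞) := by
          rw [← hsplit, Stream'.map_append_stream]
          have := ubB φ hφ0 hφ1 (w.map not) _ hnd
          rwa [mat_map_not] at this
        have hnxil : (q : ℝ≥0∞) / (p : ℝ≥0∞) ≤ φ (Stream'.map not ξ) := by
          rw [← hsplit, Stream'.map_append_stream]
          have := lbA φ hφ0 hφ1 (w.map not) (Stream'.map not (Stream'.drop n ξ))
          rwa [mat_map_not] at this
        have hdiff : ((q + q' : ℕ) : ℝ≥0∞) / ((p + p' : ℕ) : ℝ≥0∞) ≤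
            (q : ℝ≥0∞) / (p : ℝ≥0∞) + ((j + 1 : ℕ) : ℝ≥0∞)⁻¹ :=
          diff_le p p' q q' j (mat_det w) hp1 hm
        have hq0 : (q : ℝ≥0∞) / (p : ℝ≥0∞) ≤ (φ ξ)⁻¹ := by
          refine le_trans ?_ (ENNReal.inv_le_inv.2 hxiu)
          rw [ENNReal.inv_div (Or.inr (ENNReal.natCast_ne_top _))
            (Or.inr (show (p : ℝ≥0∞) ≠ 0 by exact_mod_cast by omega))]
        have hq1 : (φ ξ)⁻¹ ≤ ((q + q' : ℕ) : ℝ≥0∞) / ((p + p' : ℕ) : ℝ≥0∞) := by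
          refine le_trans (ENNReal.inv_le_inv.2 hxil) ?_
          rw [ENNReal.inv_div (Or.inr (ENNReal.natCast_ne_top _))
            (Or.inr (show ((p + p' : ℕ) : ℝ≥0∞) ≠ 0 by exact_mod_cast by omega))]
        constructor
        · refine le_trans hnxiu ?_
          have : ((q' + q : ℕ) : ℝ≥0∞) / ((p' + p : ℕ) : ℝ≥0∞)
              = ((q + q' : ℕ) : ℝ≥0∞) / ((p + p' : ℕ) : ℝ≥0∞) := by
            rw [Nat.add_comm q' q, Nat.add_comm p' p]
          rw [this]
          exact le_trans hdiff (add_le_add_left hq0 _)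
        · exact le_trans hq1 (le_trans hdiff (add_le_add_left hnxil _))
      -- conclude by letting j → ∞
      have approx : ∀ (a b : ℝ≥0∞), (∀ j : ℕ, a ≤ b + ((j + 1 : ℕ) : ℝ≥0∞)⁻¹) → a ≤ b := by
        intro a b h
        apply ENNReal.le_of_forall_pos_le_add
        intro ε hε _
        obtain ⟨k, hk⟩ := ENNReal.exists_inv_nat_lt
          (show ((ε : ℝ≥0∞)) ≠ 0 from by exact_mod_cast hε.ne')
        refine le_trans (h k) (add_le_add_right (le_trans ?_ hk.le) b)
        exact ENNReal.inv_le_inv.2 (by exact_mod_cast Nat.le_succ k)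
      exact le_antisymm (approx _ _ (fun j => (key j).1)) (approx _ _ (fun j => (key j).2))

end PhiLemmas


section RealLemma

lemma toReal_magic (a : ℝ≥0∞) :
    (((1 : ℝ≥0∞) + a⁻¹)⁻¹).toReal = 1 - (((1 : ℝ≥0∞) + a)⁻¹).toReal := by
  rcases eq_or_ne a ⊤ with ha | ha
  · simp [ha]
  rcases eq_or_ne a 0 with h0 | h0
  · simp [h0]
  have ht : 0 < a.toReal := ENNReal.toReal_pos h0 ha
  have h1 : ((1 : ℝ≥0∞) + a⁻¹).toReal = 1 + (a.toReal)⁻¹ := by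
    rw [ENNReal.toReal_add ENNReal.one_ne_top (ENNReal.inv_ne_top.2 h0),
      ENNReal.toReal_one, ENNReal.toReal_inv]
  have h2 : ((1 : ℝ≥0∞) + a).toReal = 1 + a.toReal := by
    rw [ENNReal.toReal_add ENNReal.one_ne_top ha, ENNReal.toReal_one]
  rw [ENNReal.toReal_inv, ENNReal.toReal_inv, h1, h2]
  have h4 : (1 : ℝ) + a.toReal ≠ 0 := by positivity
  have h5 : a.toReal ≠ 0 := ne_of_gt ht
  rw [eq_sub_iff_add_eq, inv_add_inv (by positivity) h4]
  field_simp
  ring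

end RealLemma
end SB14

open OnePoint

/-- under the identification Φ, the map x corresponds to t ↦ t + 1
(with ∞ + 1 = ∞): Φ(ξ) + 1 = Φ(x(ξ)). -/
theorem Phi_x_is_translation
    (φ : Stream' Bool → ENNReal)
    (hφ0 : ∀ ξ, φ (Stream'.cons false ξ) = (1 + (φ ξ)⁻¹)⁻¹)
    (hφ1 : ∀ ξ, φ (Stream'.cons true ξ) = 1 + φ ξ)
    (Φ : Stream' Bool → OnePoint ℝ)
    (hΦ1 : ∀ ξ, Φ (Stream'.cons true ξ) =
      if φ ξ = ⊤ then (∞ : OnePoint ℝ) else ((φ ξ).toReal : OnePoint ℝ))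
    (hΦ0 : ∀ ξ, Φ (Stream'.cons false ξ) =
      if φ (Stream'.map not ξ) = ⊤ then (∞ : OnePoint ℝ)
      else ((-(φ (Stream'.map not ξ)).toReal : ℝ) : OnePoint ℝ))
    (x : Stream' Bool → Stream' Bool)
    (hx00 : ∀ η, x (Stream'.cons false (Stream'.cons false η)) = Stream'.cons false η)
    (hx01 : ∀ η, x (Stream'.cons false (Stream'.cons true η)) =
      Stream'.cons true (Stream'.cons false η))
    (hx1 : ∀ η, x (Stream'.cons true η) =
      Stream'.cons true (Stream'.cons true η)) :
    ∀ ξ : Stream' Bool,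
      (∀ r : ℝ, Φ ξ = (r : OnePoint ℝ) → Φ (x ξ) = ((r + 1 : ℝ) : OnePoint ℝ)) ∧
      (Φ ξ = (∞ : OnePoint ℝ) → Φ (x ξ) = (∞ : OnePoint ℝ)) := by
  have key := SB14.phi_not φ hφ0 hφ1
  intro ξ
  rcases hb0 : ξ.head with _ | _
  · -- ξ starts with false
    have hξ : ξ = Stream'.cons false ξ.tail := by
      conv_lhs => rw [← Stream'.eta ξ, hb0]
    rcases hb1 : ξ.tail.head with _ | _
    · -- ξ = false :: false :: η
      set η := ξ.tail.tail with hη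
      have hξ2 : ξ = Stream'.cons false (Stream'.cons false η) := by
        rw [hξ]
        conv_lhs => rw [← Stream'.eta ξ.tail, hb1]
      set A := φ (Stream'.map not η) with hA
      have hmap : Stream'.map not (Stream'.cons false η) =
          Stream'.cons true (Stream'.map not η) := by
        rw [Stream'.map_cons]; rfl
      have hΦξ : Φ ξ = if 1 + A = ⊤ then (∞ : OnePoint ℝ)
          else (((-(1 + A).toReal : ℝ)) : OnePoint ℝ) := by
        rw [hξ2, hΦ0, hmap, hφ1]
      have hΦxξ : Φ (x ξ) = if A = ⊤ then (∞ : OnePoint ℝ)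
          else (((-A.toReal : ℝ)) : OnePoint ℝ) := by
        rw [hξ2, hx00, hΦ0]
      constructor
      · intro r hr
        rw [hΦξ] at hr
        by_cases hA' : A = ⊤
        · rw [if_pos (by simp [hA'])] at hr
          exact absurd hr (infty_ne_coe r)
        · have h1A : 1 + A ≠ ⊤ := by
            simp [ENNReal.add_eq_top, hA']
          rw [if_neg h1A] at hr
          have hr' : -(1 + A).toReal = r := coe_eq_coe.1 hr
          rw [hΦxξ, if_neg hA']
          rw [coe_eq_coe]
          rw [ENNReal.toReal_add ENNReal.one_ne_top hA', ENNReal.toReal_one] at hr'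
          linarith
      · intro h
        rw [hΦξ] at h
        by_cases h1A : 1 + A = ⊤
        · have hA' : A = ⊤ := by
            by_contra hc
            exact absurd h1A (by simp [ENNReal.add_eq_top, hc])
          rw [hΦxξ, if_pos hA']
        · rw [if_neg h1A] at h
          exact absurd h (coe_ne_infty _)
    · -- ξ = false :: true :: η
      set η := ξ.tail.tail with hη
      have hξ2 : ξ = Stream'.cons false (Stream'.cons true η) := by
        rw [hξ]
        conv_lhs => rw [← Stream'.eta ξ.tail, hb1]
      set a := φ η with ha
      have hmap : Stream'.map not (Stream'.cons true η) =
          Stream'.cons false (Stream'.map not η) := by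
        rw [Stream'.map_cons]; rfl
      have hval : φ (Stream'.map not (Stream'.cons true η)) = (1 + a)⁻¹ := by
        rw [hmap, hφ0, key η, inv_inv]
      have hval2 : φ (Stream'.cons false η) = (1 + a⁻¹)⁻¹ := hφ0 η
      have hne1 : (1 + a)⁻¹ ≠ ⊤ := by
        rw [ENNReal.inv_ne_top]
        exact fun h => by simp [add_eq_zero] at h
      have hne2 : (1 + a⁻¹)⁻¹ ≠ ⊤ := by
        rw [ENNReal.inv_ne_top]
        exact fun h => by simp [add_eq_zero] at h
      have hΦξ : Φ ξ = (((-((1 + a)⁻¹).toReal : ℝ)) : OnePoint ℝ) := by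
        rw [hξ2, hΦ0, hval, if_neg hne1]
      have hΦxξ : Φ (x ξ) = ((((1 + a⁻¹)⁻¹).toReal : ℝ) : OnePoint ℝ) := by
        rw [hξ2, hx01, hΦ1, hval2, if_neg hne2]
      constructor
      · intro r hr
        rw [hΦξ] at hr
        have hr' : -((1 + a)⁻¹).toReal = r := coe_eq_coe.1 hr
        rw [hΦxξ, coe_eq_coe]
        have := SB14.toReal_magic a
        linarith [this]
      · intro h
        rw [hΦξ] at h
        exact absurd h (coe_ne_infty _)
  · -- ξ starts with true
    set η := ξ.tail with hη
    have hξ2 : ξ = Stream'.cons true η := by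
      conv_lhs => rw [← Stream'.eta ξ, hb0]
    have hΦξ : Φ ξ = if φ η = ⊤ then (∞ : OnePoint ℝ)
        else (((φ η).toReal : ℝ) : OnePoint ℝ) := by rw [hξ2, hΦ1]
    have hΦxξ : Φ (x ξ) = if 1 + φ η = ⊤ then (∞ : OnePoint ℝ)
        else (((1 + φ η).toReal : ℝ) : OnePoint ℝ) := by
      rw [hξ2, hx1, hΦ1, hφ1]
    constructor
    · intro r hr
      rw [hΦξ] at hr
      by_cases hη' : φ η = ⊤
      · rw [if_pos hη'] at hr
        exact absurd hr (infty_ne_coe r)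
      · rw [if_neg hη'] at hr
        have hr' : (φ η).toReal = r := coe_eq_coe.1 hr
        have hne : 1 + φ η ≠ ⊤ := by simp [ENNReal.add_eq_top, hη']
        rw [hΦxξ, if_neg hne, coe_eq_coe,
          ENNReal.toReal_add ENNReal.one_ne_top hη', ENNReal.toReal_one]
        linarith
    · intro h
      rw [hΦξ] at h
      by_cases hη' : φ η = ⊤
      · rw [hΦxξ, if_pos (by simp [hη'])]
      · rw [if_neg hη'] at h
        exact absurd h (coe_ne_infty _)
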